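/- Let P and Q be polynomials with deg P = n+1 and deg Q = n such that the Wronskian P'Q − PQ' has 2n distinct simple roots η_1, …, η_{2n}, and assume the values ζ_j := P(η_j)/Q(η_j) are well-defined (Q(η_j) ≠ 0) and pairwise distinct. Then for each j, the polynomial P − ζ_j·Q has η_j as a root of multiplicity exactly 2, and all its other roots are simple; in particular, P − ζ_j·Q has exactly n distinct roots. -/
import Mathlib


open Polynomial

theorem critical_value_multiplicities (n : ℕ) (hn : 1 ≤ n)
    (P Q : Polynomial ℂ) (hcop : IsCoprime P Q)
    (hP : P.natDegree = n + 1) (hQ : Q.natDegree = n)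
    (η : Fin (2 * n) → ℂ) (hη : Function.Injective η)
    (hroots : ∀ x : ℂ, (derivative P * Q - P * derivative Q).eval x = 0 ↔ ∃ j, x = η j)
    (hsimple : ∀ j, (derivative P * Q - P * derivative Q).rootMultiplicity (η j) = 1)
    (hQη : ∀ j, Q.eval (η j) ≠ 0)
    (ζ : Fin (2 * n) → ℂ) (hζdef : ∀ j, ζ j = P.eval (η j) / Q.eval (η j))
    (hζ : Function.Injective ζ) :
    ∀ j, (P - C (ζ j) * Q).rootMultiplicity (η j) = 2 ∧
      (∀ x : ℂ, (P - C (ζ j) * Q).eval x = 0 → x ≠ η j →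
        (P - C (ζ j) * Q).rootMultiplicity x = 1) ∧
      (P - C (ζ j) * Q).roots.toFinset.card = n := by
  intro j
  set W := derivative P * Q - P * derivative Q with hW
  set R := P - C (ζ j) * Q with hR
  have hRdeg : R.natDegree = n + 1 := by
    rw [hR, natDegree_sub_eq_left_of_natDegree_lt, hP]
    calc (C (ζ j) * Q).natDegree ≤ Q.natDegree := natDegree_C_mul_le _ _
      _ < P.natDegree := by omega
  have hR0 : R ≠ 0 := by
    intro h; rw [h, natDegree_zero] at hRdeg; omega
  have hW0 : W ≠ 0 := by
    intro h
    have := hsimple j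
    rw [h, rootMultiplicity_zero] at this; omega
  have hWR : derivative R * Q - R * derivative Q = W := by
    rw [hR, hW]
    simp only [derivative_sub, derivative_C_mul]
    ring
  have hRη : R.eval (η j) = 0 := by
    simp only [hR, eval_sub, eval_mul, eval_C, hζdef j,
      div_mul_cancel₀ _ (hQη j), sub_self]
  have hWη : W.eval (η j) = 0 := (hroots _).mpr ⟨j, rfl⟩
  have hW'η : (derivative W).eval (η j) ≠ 0 := by
    intro h
    have h2 : 1 < W.rootMultiplicity (η j) := by
      rw [lt_rootMultiplicity_iff_isRoot_iterate_derivative hW0]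
      intro m hm
      interval_cases m <;> simpa [IsRoot]
    have := hsimple j
    omega
  have hR'η : (derivative R).eval (η j) = 0 := by
    have h := congrArg (eval (η j)) hWR
    simp only [eval_sub, eval_mul, hRη, hWη, zero_mul, sub_zero] at h
    exact (mul_eq_zero.mp h).resolve_right (hQη j)
  have hR''η : (derivative (derivative R)).eval (η j) ≠ 0 := by
    intro h
    apply hW'η
    have hD : derivative W = derivative (derivative R) * Q - R * derivative (derivative Q) := by
      rw [← hWR]
      simp only [derivative_sub, derivative_mul]
      ring
    rw [hD]
    simp [h, hRη]
  have hmult2 : R.rootMultiplicity (η j) = 2 := by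
    have h2 : 1 < R.rootMultiplicity (η j) := by
      rw [lt_rootMultiplicity_iff_isRoot_iterate_derivative hR0]
      intro m hm
      interval_cases m <;> simpa [IsRoot]
    have h3 : ¬ 2 < R.rootMultiplicity (η j) := by
      rw [lt_rootMultiplicity_iff_isRoot_iterate_derivative hR0]
      push_neg
      exact ⟨2, le_rfl, by
        simpa [IsRoot, Function.iterate_succ_apply', Function.iterate_one] using hR''η⟩
    omega
  have hsimp : ∀ x : ℂ, R.eval x = 0 → x ≠ η j → R.rootMultiplicity x = 1 := by
    intro x hx hne
    have h1 : 0 < R.rootMultiplicity x := (rootMultiplicity_pos hR0).mpr hx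
    have h2 : ¬ 1 < R.rootMultiplicity x := by
      rw [lt_rootMultiplicity_iff_isRoot_iterate_derivative hR0]
      push_neg
      refine ⟨1, le_rfl, ?_⟩
      simp only [Function.iterate_one, IsRoot]
      intro hx'
      have hWx : W.eval x = 0 := by
        rw [← hWR]
        simp [hx, hx']
      obtain ⟨k, rfl⟩ := (hroots x).mp hWx
      have hPk : P.eval (η k) = ζ j * Q.eval (η k) := by
        have := hx
        simp only [hR, eval_sub, eval_mul, eval_C, sub_eq_zero] at this
        exact this
      have hzk : ζ k = ζ j := by
        rw [hζdef k, hPk, mul_div_assoc, div_self (hQη k), mul_one]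
      exact hne (by rw [hζ hzk])
    omega
  refine ⟨hmult2, hsimp, ?_⟩
  have hsplit : Multiset.card R.roots = n + 1 := by
    rw [← hRdeg]
    exact splits_iff_card_roots.mp (IsAlgClosed.splits R)
  have hsum : ∑ x ∈ R.roots.toFinset, R.roots.count x = Multiset.card R.roots :=
    Multiset.toFinset_sum_count_eq _
  have hmem : η j ∈ R.roots.toFinset := by
    rw [Multiset.mem_toFinset, mem_roots hR0]
    exact hRη
  rw [← Finset.add_sum_erase _ _ hmem] at hsum
  have hcount : ∀ x ∈ R.roots.toFinset.erase (η j), R.roots.count x = 1 := by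
    intro x hx
    rw [count_roots]
    refine hsimp x ?_ (Finset.ne_of_mem_erase hx)
    have := Finset.mem_of_mem_erase hx
    rw [Multiset.mem_toFinset, mem_roots hR0] at this
    exact this
  rw [Finset.sum_congr rfl hcount, Finset.sum_const, smul_eq_mul, mul_one, count_roots,
    hmult2, hsplit] at hsum
  have he := Finset.card_erase_of_mem hmem
  have hpos : 0 < R.roots.toFinset.card := Finset.card_pos.mpr ⟨_, hmem⟩
  omega
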